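/- Uniform-deterministic representation of classical 3-chain correlations: a correlation p in the minimal 3-chain scenario belongs to S0 if and only if there exist measurable functions f_A : {0,1} x [0,1] -> {0,1}, f_C : {0,1} x [0,1] -> {0,1}, and a measurable function g : [0,1]^2 -> [0,1] such that for all a,b,c,x,z in {0,1}: p(a,b,c|x,z) equals the integral over (l1,l2) in [0,1]^2 with respect to Lebesgue measure of 1[f_A(x,l1) = a] * h_b(l1,l2) * 1[f_C(z,l2) = c], where h_1 := g and h_0 := 1 - g. -/

import Mathlib

open Finset

/-- A correlation in the minimal 3-chain scenario: `p a b c x z = p(a,b,c|x,z)`. -/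
abbrev Corr : Type := Fin 2 → Fin 2 → Fin 2 → Fin 2 → Fin 2 → ℝ

/-- `p` is a valid correlation: nonnegative and normalized for every input pair. -/
def IsCorrelation (p : Corr) : Prop :=
  (∀ a b c x z, 0 ≤ p a b c x z) ∧
  (∀ x z, ∑ a : Fin 2, ∑ b : Fin 2, ∑ c : Fin 2, p a b c x z = 1)

/-- Probability weights on the finite set `Fin n`. -/
def IsWeights {n : ℕ} (q : Fin n → ℝ) : Prop :=
  (∀ l, 0 ≤ q l) ∧ ∑ l, q l = 1

/-- A no-signalling box with binary outputs and input sets `X`, `Y`. -/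
def IsNSBox {X Y : Type} [Fintype X] [Fintype Y]
    (nb : Fin 2 → Fin 2 → X → Y → ℝ) : Prop :=
  (∀ o1 o2 x y, 0 ≤ nb o1 o2 x y) ∧
  (∀ x y, ∑ o1 : Fin 2, ∑ o2 : Fin 2, nb o1 o2 x y = 1) ∧
  (∀ o1 x y y', ∑ o2 : Fin 2, nb o1 o2 x y = ∑ o2 : Fin 2, nb o1 o2 x y') ∧
  (∀ o2 x x' y, ∑ o1 : Fin 2, nb o1 o2 x y = ∑ o1 : Fin 2, nb o1 o2 x' y)

/-- `S0`: classical 3-chain correlations. -/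
def MemS0 (p : Corr) : Prop :=
  ∃ (n1 n2 : ℕ) (q1 : Fin n1 → ℝ) (q2 : Fin n2 → ℝ)
    (pA : Fin 2 → Fin 2 → Fin n1 → ℝ)
    (pB : Fin 2 → Fin n1 → Fin n2 → ℝ)
    (pC : Fin 2 → Fin 2 → Fin n2 → ℝ),
    IsWeights q1 ∧ IsWeights q2 ∧
    (∀ a x l1, 0 ≤ pA a x l1) ∧ (∀ x l1, ∑ a : Fin 2, pA a x l1 = 1) ∧
    (∀ b l1 l2, 0 ≤ pB b l1 l2) ∧ (∀ l1 l2, ∑ b : Fin 2, pB b l1 l2 = 1) ∧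
    (∀ c z l2, 0 ≤ pC c z l2) ∧ (∀ z l2, ∑ c : Fin 2, pC c z l2 = 1) ∧
    (∀ a b c x z, p a b c x z =
      ∑ l1, ∑ l2, q1 l1 * q2 l2 * pA a x l1 * pB b l1 l2 * pC c z l2)

/-- `S1^[AB^O BC^L]`: a no-signalling (OPT) source between Alice and Bob,
a classical source between Bob and Charlie. -/
def MemS1ABo (p : Corr) : Prop :=
  ∃ (n : ℕ) (q : Fin n → ℝ)
    (nb : Fin 2 → Fin 2 → Fin 2 → Fin n → ℝ)
    (pC : Fin 2 → Fin 2 → Fin n → ℝ),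
    IsWeights q ∧ IsNSBox nb ∧
    (∀ c z l, 0 ≤ pC c z l) ∧ (∀ z l, ∑ c : Fin 2, pC c z l = 1) ∧
    (∀ a b c x z, p a b c x z = ∑ l, q l * nb a b x l * pC c z l)

/-- `S1^[AB^L BC^O]`: a classical source between Alice and Bob,
a no-signalling (OPT) source between Bob and Charlie. -/
def MemS1BCo (p : Corr) : Prop :=
  ∃ (n : ℕ) (q : Fin n → ℝ)
    (pA : Fin 2 → Fin 2 → Fin n → ℝ)
    (nb : Fin 2 → Fin 2 → Fin n → Fin 2 → ℝ),
    IsWeights q ∧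
    (∀ a x l, 0 ≤ pA a x l) ∧ (∀ x l, ∑ a : Fin 2, pA a x l = 1) ∧
    IsNSBox nb ∧
    (∀ a b c x z, p a b c x z = ∑ l, q l * pA a x l * nb b c l z)

/-- `S2`: the no-signalling constraints of the 3-chain network. -/
def MemS2 (p : Corr) : Prop :=
  (∃ (pA : Fin 2 → Fin 2 → ℝ) (pC : Fin 2 → Fin 2 → ℝ),
    (∀ a x, 0 ≤ pA a x) ∧ (∀ x, ∑ a : Fin 2, pA a x = 1) ∧
    (∀ c z, 0 ≤ pC c z) ∧ (∀ z, ∑ c : Fin 2, pC c z = 1) ∧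
    (∀ a c x z, ∑ b : Fin 2, p a b c x z = pA a x * pC c z)) ∧
  (∀ a b x z z', ∑ c : Fin 2, p a b c x z = ∑ c : Fin 2, p a b c x z') ∧
  (∀ b c x x' z, ∑ a : Fin 2, p a b c x z = ∑ a : Fin 2, p a b c x' z)

section AuxSection
open MeasureTheory Set

namespace S0Aux


/-! ### Cumulative sums and the index (step) function -/

noncomputable def cum {n : ℕ} (q : Fin n → ℝ) : ℕ → ℝ :=
  fun k => ∑ i ∈ Finset.range k, (if h : i < n then q ⟨i, h⟩ else 0)

lemma cum_zero {n : ℕ} (q : Fin n → ℝ) : cum q 0 = 0 := by simp [cum]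

lemma cum_succ {n : ℕ} (q : Fin n → ℝ) (k : ℕ) (hk : k < n) :
    cum q (k + 1) = cum q k + q ⟨k, hk⟩ := by
  simp [cum, Finset.sum_range_succ, hk]

lemma cum_mono {n : ℕ} (q : Fin n → ℝ) (hq : ∀ i, 0 ≤ q i) : Monotone (cum q) := by
  intro a b hab
  apply Finset.sum_le_sum_of_subset_of_nonneg (Finset.range_subset_range.mpr hab)
  intro i _ _
  by_cases h : i < n <;> simp [h, hq]

lemma cum_top {n : ℕ} (q : Fin n → ℝ) (hq : ∑ i, q i = 1) : cum q n = 1 := by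
  rw [cum, ← Fin.sum_univ_eq_sum_range (fun i => if h : i < n then q ⟨i, h⟩ else 0) n, ← hq]
  exact Finset.sum_congr rfl (fun i _ => by simp [i.isLt])

noncomputable def Nf {n : ℕ} (q : Fin n → ℝ) (l : ℝ) : ℕ :=
  ((Finset.range n).filter (fun k => cum q k < l)).card

lemma Nf_le {n : ℕ} (q : Fin n → ℝ) (l : ℝ) : Nf q l ≤ n :=
  (Finset.card_filter_le _ _).trans (Finset.card_range n).le

noncomputable def idx {n : ℕ} (hn : 0 < n) (q : Fin n → ℝ) (l : ℝ) : Fin n :=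
  ⟨Nf q l - 1, by have := Nf_le q l; omega⟩

lemma Nf_mono {n : ℕ} (q : Fin n → ℝ) : Monotone (Nf q) := by
  intro a b hab
  apply Finset.card_le_card
  intro k hk
  simp only [Finset.mem_filter] at hk ⊢
  exact ⟨hk.1, hk.2.trans_le hab⟩

lemma idx_mono {n : ℕ} (hn : 0 < n) (q : Fin n → ℝ) : Monotone (idx hn q) := by
  intro a b hab
  simp only [idx, Fin.mk_le_mk]
  have := Nf_mono q hab; omega

lemma idx_eq {n : ℕ} (hn : 0 < n) (q : Fin n → ℝ) (hq : ∀ i, 0 ≤ q i)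
    (k : ℕ) (hk : k < n) (l : ℝ) (hl : l ∈ Ioc (cum q k) (cum q (k + 1))) :
    idx hn q l = ⟨k, hk⟩ := by
  have hNf : Nf q l = k + 1 := by
    have hfil : (Finset.range n).filter (fun i => cum q i < l) = Finset.range (k + 1) := by
      ext i
      simp only [Finset.mem_filter, Finset.mem_range]
      constructor
      · rintro ⟨hin, hci⟩
        by_contra hik
        push_neg at hik
        exact absurd hci (not_lt.mpr (hl.2.trans (cum_mono q hq hik)))
      · intro hik
        exact ⟨by omega, lt_of_le_of_lt (cum_mono q hq (by omega)) hl.1⟩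
    rw [Nf, hfil, Finset.card_range]
  simp only [idx, hNf, Fin.mk.injEq]
  omega

lemma measurable_idx {n : ℕ} (hn : 0 < n) (q : Fin n → ℝ) : Measurable (idx hn q) := by
  apply measurable_to_countable'
  intro k
  have hoc : OrdConnected (idx hn q ⁻¹' {k}) := by
    constructor
    intro a ha b hb z hz
    have h1 : idx hn q a ≤ idx hn q z := idx_mono hn q hz.1
    have h2 : idx hn q z ≤ idx hn q b := idx_mono hn q hz.2
    simp only [Set.mem_preimage, Set.mem_singleton_iff] at ha hb ⊢
    rw [ha] at h1; rw [hb] at h2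
    exact le_antisymm h2 h1
  exact hoc.measurableSet

/-! ### Step-function integrals -/

lemma int_step2 (α β m u v : ℝ) (h1 : α ≤ m) (h2 : m ≤ β) :
    ∫ l in Ioc α β, (if l ≤ m then u else v) = (m - α) * u + (β - m) * v := by
  have heq : (fun l : ℝ => if l ≤ m then u else v) =
      (fun l => Set.indicator (Iic m) (fun _ => u) l + Set.indicator (Ioi m) (fun _ => v) l) := by
    funext l
    by_cases h : l ≤ m
    · simp [Set.indicator, h, not_lt.mpr h]
    · simp [Set.indicator, h, not_le.mp h]
  rw [heq]
  have hvol : volume (Ioc α β) < ⊤ := by simp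
  have hi1 : IntegrableOn ((Iic m).indicator (fun _ => u)) (Ioc α β) :=
    (integrableOn_const hvol.ne).indicator measurableSet_Iic
  have hi2 : IntegrableOn ((Ioi m).indicator (fun _ => v)) (Ioc α β) :=
    (integrableOn_const hvol.ne).indicator measurableSet_Ioi
  rw [integral_add hi1 hi2, setIntegral_indicator measurableSet_Iic,
    setIntegral_indicator measurableSet_Ioi]
  have e1 : Ioc α β ∩ Iic m = Ioc α m := by
    rw [Set.Ioc_inter_Iic, min_eq_right h2]
  have e2 : Ioc α β ∩ Ioi m = Ioc m β := by
    ext l; simp only [Set.mem_inter_iff, Set.mem_Ioc, Set.mem_Ioi]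
    constructor
    · rintro ⟨⟨_, h4⟩, h5⟩; exact ⟨h5, h4⟩
    · rintro ⟨h3, h4⟩; exact ⟨⟨lt_of_le_of_lt h1 h3, h4⟩, h3⟩
  rw [e1, e2, setIntegral_const, setIntegral_const, measureReal_def, measureReal_def, Real.volume_Ioc, Real.volume_Ioc,
    ENNReal.toReal_ofReal (by linarith), ENNReal.toReal_ofReal (by linarith)]
  simp [smul_eq_mul]

lemma int_step2_integrable (α β m u v : ℝ) :
    IntegrableOn (fun l : ℝ => if l ≤ m then u else v) (Ioc α β) := by
  have heq : (fun l : ℝ => if l ≤ m then u else v) =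
      (fun l => Set.indicator (Iic m) (fun _ => u) l + Set.indicator (Ioi m) (fun _ => v) l) := by
    funext l
    by_cases h : l ≤ m
    · simp [Set.indicator, h, not_lt.mpr h]
    · simp [Set.indicator, h, not_le.mp h]
  rw [heq]
  have hvol : volume (Ioc α β) < ⊤ := by simp
  exact ((integrableOn_const hvol.ne).indicator measurableSet_Iic).add
    ((integrableOn_const hvol.ne).indicator measurableSet_Ioi)

/-- Decomposition of the integral over `[0,1]` along a monotone partition. -/
lemma integral_pieces (n : ℕ) (c : ℕ → ℝ) (hmono : Monotone c) (hc0 : c 0 = 0) (hcn : c n = 1)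
    (φ : ℝ → ℝ) (w : ℕ → ℝ)
    (hint : ∀ k, k < n → IntegrableOn φ (Ioc (c k) (c (k + 1))))
    (hval : ∀ k, k < n → ∫ l in Ioc (c k) (c (k + 1)), φ l = w k) :
    ∫ l in Icc (0 : ℝ) 1, φ l = ∑ k ∈ Finset.range n, w k := by
  rw [integral_Icc_eq_integral_Ioc]
  have hunion : ∀ m : ℕ, (⋃ k ∈ Finset.range m, Ioc (c k) (c (k + 1))) = Ioc (c 0) (c m) := by
    intro m
    induction m with
    | zero => simp
    | succ m ih =>
      rw [Finset.range_add_one, Finset.set_biUnion_insert, ih, Set.union_comm,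
        Set.Ioc_union_Ioc_eq_Ioc (hmono (Nat.zero_le m)) (hmono (Nat.le_succ m))]
  have : Ioc (0 : ℝ) 1 = ⋃ k ∈ Finset.range n, Ioc (c k) (c (k + 1)) := by
    rw [hunion, hc0, hcn]
  rw [this, integral_biUnion_finset]
  · exact Finset.sum_congr rfl (fun k hk => hval k (Finset.mem_range.mp hk))
  · exact fun k _ => measurableSet_Ioc
  · intro i hi j hj hij
    apply Set.Ioc_disjoint_Ioc.mpr
    rcases lt_or_gt_of_ne hij with h | h
    · exact le_trans (min_le_left _ _) (le_trans (hmono h) (le_max_right _ _))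
    · exact le_trans (min_le_right _ _) (le_trans (hmono h) (le_max_left _ _))
  · exact fun k hk => hint k (Finset.mem_range.mp hk)

/-- Integral of the deterministic-response indicator over one piece. -/
lemma piece_ind (α β m : ℝ) (h1 : α ≤ m) (h2 : m ≤ β) (a : Fin 2) (K : ℝ) :
    ∫ l in Ioc α β, (if (if l ≤ m then (1 : Fin 2) else 0) = a then K else 0) =
      (if a = 1 then m - α else β - m) * K := by
  have heq : (fun l : ℝ => if (if l ≤ m then (1 : Fin 2) else 0) = a then K else 0) =
      (fun l => if l ≤ m then (if (1 : Fin 2) = a then K else 0)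
                else (if (0 : Fin 2) = a then K else 0)) := by
    funext l; by_cases h : l ≤ m <;> simp [h]
  rw [heq, int_step2 α β m _ _ h1 h2]
  fin_cases a <;> simp

lemma piece_ind_integrable (α β m : ℝ) (a : Fin 2) (K : ℝ) :
    IntegrableOn (fun l : ℝ => if (if l ≤ m then (1 : Fin 2) else 0) = a then K else 0)
      (Ioc α β) := by
  have heq : (fun l : ℝ => if (if l ≤ m then (1 : Fin 2) else 0) = a then K else 0) =
      (fun l => if l ≤ m then (if (1 : Fin 2) = a then K else 0)
                else (if (0 : Fin 2) = a then K else 0)) := by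
    funext l; by_cases h : l ≤ m <;> simp [h]
  rw [heq]
  exact int_step2_integrable α β m _ _


/-- Deterministic threshold response function. -/
noncomputable def thr {n : ℕ} (hn : 0 < n) (q : Fin n → ℝ) (m : Fin n → ℝ) : ℝ → Fin 2 :=
  fun l => if l ≤ m (idx hn q l) then 1 else 0

lemma measurable_thr {n : ℕ} (hn : 0 < n) (q : Fin n → ℝ) (m : Fin n → ℝ) :
    Measurable (thr hn q m) := by
  have hset : MeasurableSet {l : ℝ | l ≤ m (idx hn q l)} := by
    have he : {l : ℝ | l ≤ m (idx hn q l)} = ⋃ k : Fin n, (idx hn q ⁻¹' {k} ∩ Iic (m k)) := by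
      ext l
      simp only [Set.mem_setOf_eq, Set.mem_iUnion, Set.mem_inter_iff, Set.mem_preimage,
        Set.mem_singleton_iff, Set.mem_Iic]
      constructor
      · intro h; exact ⟨idx hn q l, rfl, h⟩
      · rintro ⟨k, hk, h⟩; rw [hk]; exact h
    rw [he]
    exact MeasurableSet.iUnion
      (fun k => ((measurable_idx hn q) (measurableSet_singleton k)).inter measurableSet_Iic)
  exact Measurable.ite hset measurable_const measurable_const

/-- The master step-integral computation. -/
lemma integral_thr {n : ℕ} (hn : 0 < n) (q : Fin n → ℝ) (hq0 : ∀ i, 0 ≤ q i) (hq1 : ∑ i, q i = 1)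
    (r : Fin 2 → Fin n → ℝ) (hr0 : ∀ i k, 0 ≤ r i k) (hrs : ∀ k, r 0 k + r 1 k = 1)
    (v : Fin n → ℝ) (a : Fin 2) :
    ∫ l in Icc (0 : ℝ) 1,
        (if thr hn q (fun k => cum q k + q k * r 1 k) l = a then (1 : ℝ) else 0) * v (idx hn q l)
      = ∑ k, q k * r a k * v k := by
  set m : Fin n → ℝ := fun k => cum q k + q k * r 1 k with hm
  have hr1le : ∀ k, r 1 k ≤ 1 := fun k => by have := hrs k; have := hr0 0 k; linarith
  have hbound : ∀ (k : ℕ) (hk : k < n), cum q k ≤ m ⟨k, hk⟩ ∧ m ⟨k, hk⟩ ≤ cum q (k + 1) := by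
    intro k hk
    constructor
    · exact le_add_of_nonneg_right (mul_nonneg (hq0 _) (hr0 1 _))
    · rw [cum_succ q k hk]
      have : q ⟨k, hk⟩ * r 1 ⟨k, hk⟩ ≤ q ⟨k, hk⟩ * 1 :=
        mul_le_mul_of_nonneg_left (hr1le _) (hq0 _)
      simp only [hm]; linarith
  have hEq : ∀ (k : ℕ) (hk : k < n),
      EqOn (fun l => (if thr hn q m l = a then (1 : ℝ) else 0) * v (idx hn q l))
        (fun l => (if (if l ≤ m ⟨k, hk⟩ then (1 : Fin 2) else 0) = a then (1 : ℝ) else 0) * v ⟨k, hk⟩)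
        (Ioc (cum q k) (cum q (k + 1))) := by
    intro k hk l hl
    simp only [thr, idx_eq hn q hq0 k hk l hl]
  rw [integral_pieces n (cum q) (cum_mono q hq0) (cum_zero q) (cum_top q hq1) _
    (fun k => if hk : k < n then q ⟨k, hk⟩ * r a ⟨k, hk⟩ * v ⟨k, hk⟩ else 0)
    (fun k hk => by
      refine IntegrableOn.congr_fun ?_ (hEq k hk).symm measurableSet_Ioc
      exact (piece_ind_integrable _ _ (m ⟨k, hk⟩) a 1).mul_const (v ⟨k, hk⟩))
    (fun k hk => by
      rw [setIntegral_congr_fun measurableSet_Ioc (hEq k hk)]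
      rw [integral_mul_const, piece_ind _ _ _ (hbound k hk).1 (hbound k hk).2 a 1]
      simp only [dif_pos hk]
      have h1 : m ⟨k, hk⟩ - cum q k = q ⟨k, hk⟩ * r 1 ⟨k, hk⟩ := by simp [hm]
      have h2 : cum q (k + 1) - m ⟨k, hk⟩ = q ⟨k, hk⟩ * r 0 ⟨k, hk⟩ := by
        rw [cum_succ q k hk]
        have : r 0 ⟨k, hk⟩ = 1 - r 1 ⟨k, hk⟩ := by have := hrs ⟨k, hk⟩; linarith
        simp only [hm, this]; ring
      rcases (by omega : a = 0 ∨ a = 1) with rfl | rfl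
      · rw [if_neg (by decide), h2]; ring
      · rw [if_pos rfl, h1]; ring)]
  rw [← Fin.sum_univ_eq_sum_range (fun k => if hk : k < n then q ⟨k, hk⟩ * r a ⟨k, hk⟩ * v ⟨k, hk⟩ else 0) n]
  exact Finset.sum_congr rfl (fun k _ => by simp [k.isLt])

/-- The cell of the partition of `[0,1]` induced by a response profile. -/
def pre (G : ℝ → Fin 2 → Fin 2) (s : Fin 2 → Fin 2) : Set ℝ :=
  Set.Icc 0 1 ∩ G ⁻¹' {s}

/-- Bob's conditional response function. -/
noncomputable def hbf (g : ℝ → ℝ → ℝ) (b : Fin 2) (l1 l2 : ℝ) : ℝ :=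
  if b = 1 then g l1 l2 else 1 - g l1 l2

/-- Bob's cell weight. -/
noncomputable def KK (g : ℝ → ℝ → ℝ) (GA GC : ℝ → Fin 2 → Fin 2) (b : Fin 2)
    (s t : Fin 2 → Fin 2) : ℝ :=
  ∫ l1 in pre GA s, ∫ l2 in pre GC t, hbf g b l1 l2

lemma measurableSet_pre {G : ℝ → Fin 2 → Fin 2} (hG : Measurable G) (s : Fin 2 → Fin 2) :
    MeasurableSet (pre G s) :=
  measurableSet_Icc.inter (hG (measurableSet_singleton s))

lemma volume_pre_ne_top (G : ℝ → Fin 2 → Fin 2) (s : Fin 2 → Fin 2) :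
    volume (pre G s) ≠ ⊤ := by
  refine ne_top_of_le_ne_top ?_ (measure_mono Set.inter_subset_left)
  simp [Real.volume_Icc]

lemma volume_pre_toReal_le (G : ℝ → Fin 2 → Fin 2) (s : Fin 2 → Fin 2) :
    (volume (pre G s)).toReal ≤ 1 := by
  have h1 : volume (pre G s) ≤ volume (Set.Icc (0 : ℝ) 1) :=
    measure_mono Set.inter_subset_left
  have h2 : (volume (pre G s)).toReal ≤ (volume (Set.Icc (0 : ℝ) 1)).toReal :=
    ENNReal.toReal_mono (by simp [Real.volume_Icc]) h1
  simpa [Real.volume_Icc] using h2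

lemma volume_pre_lt_top (G : ℝ → Fin 2 → Fin 2) (s : Fin 2 → Fin 2) :
    volume (pre G s) < ⊤ :=
  lt_top_iff_ne_top.mpr (volume_pre_ne_top G s)

lemma bounded_integrableOn {S : Set ℝ} (hS : volume S < ⊤) {f : ℝ → ℝ} (hf : Measurable f)
    {M : ℝ} (hM : ∀ l, ‖f l‖ ≤ M) : IntegrableOn f S :=
  Integrable.mono' (integrableOn_const hS.ne) hf.aestronglyMeasurable (ae_of_all _ hM)

lemma integral_partition {τ : Type} [Fintype τ] [MeasurableSpace τ] [MeasurableSingletonClass τ]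
    (G : ℝ → τ) (hG : Measurable G) (S : Set ℝ) (hS : MeasurableSet S)
    (φ : ℝ → ℝ) (hφ : ∀ t : τ, IntegrableOn φ (S ∩ G ⁻¹' {t})) :
    ∫ l in S, φ l = ∑ t : τ, ∫ l in S ∩ G ⁻¹' {t}, φ l := by
  have hcover : S = ⋃ t ∈ (Finset.univ : Finset τ), (S ∩ G ⁻¹' {t}) := by
    ext l; simp
  have hmeas : ∀ t ∈ (Finset.univ : Finset τ), MeasurableSet (S ∩ G ⁻¹' {t}) :=
    fun t _ => hS.inter (hG (measurableSet_singleton t))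
  have hdisj : Set.Pairwise ↑(Finset.univ : Finset τ)
      (Function.onFun Disjoint (fun t => S ∩ G ⁻¹' {t})) := by
    intro i _ j _ hij
    rw [Function.onFun, Set.disjoint_left]
    rintro l ⟨_, hi⟩ ⟨_, hj⟩
    simp only [Set.mem_preimage, Set.mem_singleton_iff] at hi hj
    exact hij (hi ▸ hj ▸ rfl)
  have h := integral_biUnion_finset (Finset.univ : Finset τ)
    (s := fun t => S ∩ G ⁻¹' {t}) (f := φ) hmeas hdisj (fun t _ => hφ t)
  rw [← hcover] at h
  exact h

lemma measure_partition {τ : Type} [Fintype τ] [MeasurableSpace τ] [MeasurableSingletonClass τ]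
    (G : ℝ → τ) (hG : Measurable G) (S : Set ℝ) (hS : MeasurableSet S) :
    ∑ t : τ, volume (S ∩ G ⁻¹' {t}) = volume S := by
  have hcover : S = ⋃ t ∈ (Finset.univ : Finset τ), (S ∩ G ⁻¹' {t}) := by
    ext l; simp
  have hmeas : ∀ t ∈ (Finset.univ : Finset τ), MeasurableSet (S ∩ G ⁻¹' {t}) :=
    fun t _ => hS.inter (hG (measurableSet_singleton t))
  have hdisj : Set.PairwiseDisjoint ↑(Finset.univ : Finset τ) (fun t => S ∩ G ⁻¹' {t}) := by
    intro i _ j _ hij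
    rw [Function.onFun, Set.disjoint_left]
    rintro l ⟨_, hi⟩ ⟨_, hj⟩
    simp only [Set.mem_preimage, Set.mem_singleton_iff] at hi hj
    exact hij (hi ▸ hj ▸ rfl)
  rw [← measure_biUnion_finset hdisj hmeas, ← hcover]

variable {g : ℝ → ℝ → ℝ}

lemma hbf_meas_uncurry (hmg : Measurable (Function.uncurry g)) (b : Fin 2) :
    Measurable (Function.uncurry (hbf g b)) := by
  by_cases h1 : b = 1
  · have : Function.uncurry (hbf g b) = Function.uncurry g := by
      funext w; simp [Function.uncurry, hbf, h1]
    rw [this]; exact hmg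
  · have : Function.uncurry (hbf g b) = fun w : ℝ × ℝ => 1 - Function.uncurry g w := by
      funext w; simp [Function.uncurry, hbf, h1]
    rw [this]; exact measurable_const.sub hmg

lemma hbf_meas_right (hmg : Measurable (Function.uncurry g)) (b : Fin 2) (l1 : ℝ) :
    Measurable (hbf g b l1) :=
  (hbf_meas_uncurry hmg b).comp measurable_prodMk_left

lemma hbf_bounds (hgb : ∀ l1 l2, 0 ≤ g l1 l2 ∧ g l1 l2 ≤ 1) (b : Fin 2) (l1 l2 : ℝ) :
    0 ≤ hbf g b l1 l2 ∧ hbf g b l1 l2 ≤ 1 := by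
  have h := hgb l1 l2
  unfold hbf
  split_ifs
  · exact h
  · constructor <;> linarith [h.1, h.2]

lemma hbf_norm_le (hgb : ∀ l1 l2, 0 ≤ g l1 l2 ∧ g l1 l2 ≤ 1) (b : Fin 2) (l1 l2 : ℝ) :
    ‖hbf g b l1 l2‖ ≤ 1 := by
  have h := hbf_bounds hgb b l1 l2
  rw [Real.norm_eq_abs, abs_le]
  constructor <;> linarith [h.1, h.2]

lemma hbf_integrableOn (hmg : Measurable (Function.uncurry g))
    (hgb : ∀ l1 l2, 0 ≤ g l1 l2 ∧ g l1 l2 ≤ 1) (b : Fin 2) (l1 : ℝ)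
    {S : Set ℝ} (hS : volume S < ⊤) : IntegrableOn (hbf g b l1) S :=
  bounded_integrableOn hS (hbf_meas_right hmg b l1) (hbf_norm_le hgb b l1)

/-- measurability of the inner partial integral. -/
lemma kf_meas (hmg : Measurable (Function.uncurry g)) (b : Fin 2) (T : Set ℝ) :
    Measurable (fun l1 => ∫ l2 in T, hbf g b l1 l2) :=
  ((hbf_meas_uncurry hmg b).stronglyMeasurable.integral_prod_right).measurable

lemma kf_norm_le (hgb : ∀ l1 l2, 0 ≤ g l1 l2 ∧ g l1 l2 ≤ 1) (b : Fin 2)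
    (GC : ℝ → Fin 2 → Fin 2) (t : Fin 2 → Fin 2) (l1 : ℝ) :
    ‖∫ l2 in pre GC t, hbf g b l1 l2‖ ≤ 1 := by
  have h := norm_setIntegral_le_of_norm_le_const_ae (μ := volume) (s := pre GC t)
    (f := hbf g b l1) (C := 1) (volume_pre_lt_top GC t)
    (ae_of_all _ (fun l2 => hbf_norm_le hgb b l1 l2))
  calc ‖∫ l2 in pre GC t, hbf g b l1 l2‖ ≤ 1 * (volume (pre GC t)).toReal := h
    _ ≤ 1 := by rw [one_mul]; exact volume_pre_toReal_le GC t

lemma kf_nonneg (hgb : ∀ l1 l2, 0 ≤ g l1 l2 ∧ g l1 l2 ≤ 1) (b : Fin 2) (T : Set ℝ) (l1 : ℝ) :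
    0 ≤ ∫ l2 in T, hbf g b l1 l2 :=
  integral_nonneg (fun l2 => (hbf_bounds hgb b l1 l2).1)

lemma KK_nonneg (hgb : ∀ l1 l2, 0 ≤ g l1 l2 ∧ g l1 l2 ≤ 1)
    (GA GC : ℝ → Fin 2 → Fin 2) (b : Fin 2) (s t : Fin 2 → Fin 2) :
    0 ≤ KK g GA GC b s t :=
  integral_nonneg (fun l1 => kf_nonneg hgb b _ l1)

lemma KK_add (hmg : Measurable (Function.uncurry g))
    (hgb : ∀ l1 l2, 0 ≤ g l1 l2 ∧ g l1 l2 ≤ 1)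
    (GA GC : ℝ → Fin 2 → Fin 2) (s t : Fin 2 → Fin 2) :
    KK g GA GC 0 s t + KK g GA GC 1 s t =
      (volume (pre GA s)).toReal * (volume (pre GC t)).toReal := by
  have hinner : ∀ l1 : ℝ,
      (∫ l2 in pre GC t, hbf g 0 l1 l2) + (∫ l2 in pre GC t, hbf g 1 l1 l2)
        = (volume (pre GC t)).toReal := by
    intro l1
    rw [← integral_add (hbf_integrableOn hmg hgb 0 l1 (volume_pre_lt_top GC t))
      (hbf_integrableOn hmg hgb 1 l1 (volume_pre_lt_top GC t))]
    have : (fun l2 => hbf g 0 l1 l2 + hbf g 1 l1 l2) = fun _ => (1 : ℝ) := by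
      funext l2; simp [hbf]
    rw [this, setIntegral_const, smul_eq_mul, mul_one, measureReal_def]
  have hi0 : IntegrableOn (fun l1 => ∫ l2 in pre GC t, hbf g 0 l1 l2) (pre GA s) :=
    bounded_integrableOn (volume_pre_lt_top GA s) (kf_meas hmg 0 _)
      (fun l1 => kf_norm_le hgb 0 GC t l1)
  have hi1 : IntegrableOn (fun l1 => ∫ l2 in pre GC t, hbf g 1 l1 l2) (pre GA s) :=
    bounded_integrableOn (volume_pre_lt_top GA s) (kf_meas hmg 1 _)
      (fun l1 => kf_norm_le hgb 1 GC t l1)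
  rw [KK, KK, ← integral_add hi0 hi1]
  have : (fun l1 => (∫ l2 in pre GC t, hbf g 0 l1 l2) + ∫ l2 in pre GC t, hbf g 1 l1 l2)
      = fun _ : ℝ => (volume (pre GC t)).toReal := funext hinner
  rw [this, setIntegral_const, smul_eq_mul, measureReal_def]

lemma KK_zeroA (GA GC : ℝ → Fin 2 → Fin 2) (b : Fin 2) (s t : Fin 2 → Fin 2)
    (h : (volume (pre GA s)).toReal = 0) : KK g GA GC b s t = 0 := by
  have hz : volume (pre GA s) = 0 := by
    rcases (ENNReal.toReal_eq_zero_iff _).mp h with h' | h'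
    · exact h'
    · exact absurd h' (volume_pre_ne_top GA s)
  rw [KK, Measure.restrict_eq_zero.mpr hz, integral_zero_measure]

lemma KK_zeroC (GA GC : ℝ → Fin 2 → Fin 2) (b : Fin 2) (s t : Fin 2 → Fin 2)
    (h : (volume (pre GC t)).toReal = 0) : KK g GA GC b s t = 0 := by
  have hz : volume (pre GC t) = 0 := by
    rcases (ENNReal.toReal_eq_zero_iff _).mp h with h' | h'
    · exact h'
    · exact absurd h' (volume_pre_ne_top GC t)
  have : ∀ l1 : ℝ, (∫ l2 in pre GC t, hbf g b l1 l2) = 0 := by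
    intro l1
    rw [Measure.restrict_eq_zero.mpr hz, integral_zero_measure]
  rw [KK]
  simp only [this, integral_zero]


lemma abs3_le_one {u v w : ℝ} (hu : |u| ≤ 1) (hv : |v| ≤ 1) (hw : |w| ≤ 1) :
    ‖u * v * w‖ ≤ 1 := by
  rw [Real.norm_eq_abs, abs_mul, abs_mul]
  exact mul_le_one₀ (mul_le_one₀ hu (abs_nonneg _) hv) (abs_nonneg _) hw

lemma abs_ind_le_one {P : Prop} [Decidable P] : |if P then (1 : ℝ) else 0| ≤ 1 := by
  split_ifs <;> simp

lemma decomp (fA fC : Fin 2 → ℝ → Fin 2) {g : ℝ → ℝ → ℝ}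
    (hmA : ∀ x, Measurable (fA x)) (hmC : ∀ z, Measurable (fC z))
    (hmg : Measurable (Function.uncurry g)) (hgb : ∀ l1 l2, 0 ≤ g l1 l2 ∧ g l1 l2 ≤ 1)
    (a b c x z : Fin 2) :
    (∫ l1 in Set.Icc (0 : ℝ) 1, ∫ l2 in Set.Icc (0 : ℝ) 1,
        (if fA x l1 = a then (1 : ℝ) else 0) * hbf g b l1 l2 *
          (if fC z l2 = c then (1 : ℝ) else 0))
    = ∑ s : Fin 2 → Fin 2, ∑ t : Fin 2 → Fin 2,
        (if s x = a then (1 : ℝ) else 0) * (if t z = c then (1 : ℝ) else 0) *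
          KK g (fun l x' => fA x' l) (fun l z' => fC z' l) b s t := by
  set GA : ℝ → Fin 2 → Fin 2 := fun l x' => fA x' l with hGAdef
  set GC : ℝ → Fin 2 → Fin 2 := fun l z' => fC z' l with hGCdef
  have hGA : Measurable GA := measurable_pi_lambda _ hmA
  have hGC : Measurable GC := measurable_pi_lambda _ hmC
  have hIccfin : volume (Set.Icc (0 : ℝ) 1) < ⊤ := by simp [Real.volume_Icc]
  have hprefin : ∀ (G : ℝ → Fin 2 → Fin 2) (s : Fin 2 → Fin 2),
      volume (Set.Icc (0 : ℝ) 1 ∩ G ⁻¹' {s}) < ⊤ :=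
    fun G s => lt_of_le_of_lt (measure_mono Set.inter_subset_left) hIccfin
  have hiA : Measurable (fun l => if fA x l = a then (1 : ℝ) else 0) :=
    Measurable.ite (hmA x (measurableSet_singleton a)) measurable_const measurable_const
  have hiC : Measurable (fun l => if fC z l = c then (1 : ℝ) else 0) :=
    Measurable.ite (hmC z (measurableSet_singleton c)) measurable_const measurable_const
  have habs : ∀ l1 l2 : ℝ,
      ‖(if fA x l1 = a then (1 : ℝ) else 0) * hbf g b l1 l2 *
        (if fC z l2 = c then (1 : ℝ) else 0)‖ ≤ 1 := by
    intro l1 l2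
    refine abs3_le_one abs_ind_le_one ?_ abs_ind_le_one
    have := hbf_norm_le hgb b l1 l2
    rwa [Real.norm_eq_abs] at this
  have hints : ∀ (l1 : ℝ) (T : Set ℝ), volume T < ⊤ →
      IntegrableOn (fun l2 => (if fA x l1 = a then (1 : ℝ) else 0) * hbf g b l1 l2 *
        (if fC z l2 = c then (1 : ℝ) else 0)) T :=
    fun l1 T hT => bounded_integrableOn hT
      ((measurable_const.mul (hbf_meas_right hmg b l1)).mul hiC) (habs l1)
  have inner : ∀ l1 : ℝ,
      (∫ l2 in Set.Icc (0 : ℝ) 1, (if fA x l1 = a then (1 : ℝ) else 0) * hbf g b l1 l2 *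
          (if fC z l2 = c then (1 : ℝ) else 0))
      = ∑ t : Fin 2 → Fin 2, (if t z = c then (1 : ℝ) else 0) *
          ((if fA x l1 = a then (1 : ℝ) else 0) *
            ∫ l2 in Set.Icc (0 : ℝ) 1 ∩ GC ⁻¹' {t}, hbf g b l1 l2) := by
    intro l1
    rw [integral_partition GC hGC (Set.Icc 0 1) measurableSet_Icc _
      (fun t => hints l1 _ (hprefin GC t))]
    refine Finset.sum_congr rfl (fun t _ => ?_)
    have heq : EqOn
        (fun l2 => (if fA x l1 = a then (1 : ℝ) else 0) * hbf g b l1 l2 *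
          (if fC z l2 = c then (1 : ℝ) else 0))
        (fun l2 => ((if t z = c then (1 : ℝ) else 0) * (if fA x l1 = a then (1 : ℝ) else 0)) *
          hbf g b l1 l2)
        (Set.Icc (0 : ℝ) 1 ∩ GC ⁻¹' {t}) := by
      intro l2 hl2
      have ht : GC l2 = t := hl2.2
      have hfz : fC z l2 = t z := by rw [← ht]
      simp only [hfz]
      ring
    rw [setIntegral_congr_fun (measurableSet_Icc.inter (hGC (measurableSet_singleton t))) heq,
      integral_const_mul]
    ring
  have houter : (∫ l1 in Set.Icc (0 : ℝ) 1, ∫ l2 in Set.Icc (0 : ℝ) 1,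
        (if fA x l1 = a then (1 : ℝ) else 0) * hbf g b l1 l2 *
          (if fC z l2 = c then (1 : ℝ) else 0))
      = ∫ l1 in Set.Icc (0 : ℝ) 1, (∑ t : Fin 2 → Fin 2, (if t z = c then (1 : ℝ) else 0) *
          ((if fA x l1 = a then (1 : ℝ) else 0) *
            ∫ l2 in Set.Icc (0 : ℝ) 1 ∩ GC ⁻¹' {t}, hbf g b l1 l2)) :=
    setIntegral_congr_fun measurableSet_Icc (fun l1 _ => inner l1)
  rw [houter]
  have hintsum : ∀ t : Fin 2 → Fin 2, IntegrableOn
      (fun l1 => (if t z = c then (1 : ℝ) else 0) *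
        ((if fA x l1 = a then (1 : ℝ) else 0) *
          ∫ l2 in Set.Icc (0 : ℝ) 1 ∩ GC ⁻¹' {t}, hbf g b l1 l2)) (Set.Icc (0 : ℝ) 1) := by
    intro t
    refine bounded_integrableOn (M := 1) hIccfin
      (measurable_const.mul (hiA.mul (kf_meas hmg b _))) (fun l1 => ?_)
    have h2 : |∫ l2 in Set.Icc (0 : ℝ) 1 ∩ GC ⁻¹' {t}, hbf g b l1 l2| ≤ 1 := by
      have := kf_norm_le hgb b GC t l1
      rw [Real.norm_eq_abs] at this
      exact this
    calc ‖(if t z = c then (1 : ℝ) else 0) *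
          ((if fA x l1 = a then (1 : ℝ) else 0) *
            ∫ l2 in Set.Icc (0 : ℝ) 1 ∩ GC ⁻¹' {t}, hbf g b l1 l2)‖
        = ‖(if t z = c then (1 : ℝ) else 0) * (if fA x l1 = a then (1 : ℝ) else 0) *
            ∫ l2 in Set.Icc (0 : ℝ) 1 ∩ GC ⁻¹' {t}, hbf g b l1 l2‖ := by rw [mul_assoc]
      _ ≤ 1 := abs3_le_one abs_ind_le_one abs_ind_le_one h2
  rw [integral_finset_sum Finset.univ (fun t _ => hintsum t)]
  have hper_t : ∀ t : Fin 2 → Fin 2,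
      (∫ l1 in Set.Icc (0 : ℝ) 1, (if t z = c then (1 : ℝ) else 0) *
        ((if fA x l1 = a then (1 : ℝ) else 0) *
          ∫ l2 in Set.Icc (0 : ℝ) 1 ∩ GC ⁻¹' {t}, hbf g b l1 l2))
      = (if t z = c then (1 : ℝ) else 0) * ∑ s : Fin 2 → Fin 2,
          ((if s x = a then (1 : ℝ) else 0) * KK g GA GC b s t) := by
    intro t
    rw [integral_const_mul]
    congr 1
    have hintA : ∀ s : Fin 2 → Fin 2, IntegrableOn
        (fun l1 => (if fA x l1 = a then (1 : ℝ) else 0) *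
          ∫ l2 in Set.Icc (0 : ℝ) 1 ∩ GC ⁻¹' {t}, hbf g b l1 l2)
        (Set.Icc (0 : ℝ) 1 ∩ GA ⁻¹' {s}) := by
      intro s
      refine bounded_integrableOn (M := 1) (hprefin GA s) (hiA.mul (kf_meas hmg b _)) (fun l1 => ?_)
      have h2 : |∫ l2 in Set.Icc (0 : ℝ) 1 ∩ GC ⁻¹' {t}, hbf g b l1 l2| ≤ 1 := by
        have := kf_norm_le hgb b GC t l1
        rwa [Real.norm_eq_abs] at this
      calc ‖(if fA x l1 = a then (1 : ℝ) else 0) *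
            ∫ l2 in Set.Icc (0 : ℝ) 1 ∩ GC ⁻¹' {t}, hbf g b l1 l2‖
          = ‖1 * (if fA x l1 = a then (1 : ℝ) else 0) *
            ∫ l2 in Set.Icc (0 : ℝ) 1 ∩ GC ⁻¹' {t}, hbf g b l1 l2‖ := by rw [one_mul]
        _ ≤ 1 := abs3_le_one (by simp) abs_ind_le_one h2
    rw [integral_partition GA hGA (Set.Icc 0 1) measurableSet_Icc _ hintA]
    refine Finset.sum_congr rfl (fun s _ => ?_)
    have heq : EqOn
        (fun l1 => (if fA x l1 = a then (1 : ℝ) else 0) *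
          ∫ l2 in Set.Icc (0 : ℝ) 1 ∩ GC ⁻¹' {t}, hbf g b l1 l2)
        (fun l1 => (if s x = a then (1 : ℝ) else 0) *
          ∫ l2 in Set.Icc (0 : ℝ) 1 ∩ GC ⁻¹' {t}, hbf g b l1 l2)
        (Set.Icc (0 : ℝ) 1 ∩ GA ⁻¹' {s}) := by
      intro l1 hl1
      have hs : GA l1 = s := hl1.2
      have hfx : fA x l1 = s x := by rw [← hs]
      simp only [hfx]
    rw [setIntegral_congr_fun (measurableSet_Icc.inter (hGA (measurableSet_singleton s))) heq,
      integral_const_mul]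
    rfl
  rw [Finset.sum_congr rfl (fun t _ => hper_t t)]
  simp_rw [Finset.mul_sum]
  rw [Finset.sum_comm]
  exact Finset.sum_congr rfl (fun s _ =>
    Finset.sum_congr rfl (fun t _ => by ring))

end S0Aux

open S0Aux

lemma forward (p : Corr) (h : MemS0 p) :
    ∃ (fA : Fin 2 → ℝ → Fin 2) (fC : Fin 2 → ℝ → Fin 2) (g : ℝ → ℝ → ℝ),
      (∀ x, Measurable (fA x)) ∧ (∀ z, Measurable (fC z)) ∧
      Measurable (Function.uncurry g) ∧
      (∀ l1 l2, 0 ≤ g l1 l2 ∧ g l1 l2 ≤ 1) ∧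
      (∀ a b c x z, p a b c x z =
        ∫ l1 in Set.Icc (0 : ℝ) 1, ∫ l2 in Set.Icc (0 : ℝ) 1,
          (if fA x l1 = a then (1 : ℝ) else 0) *
            (if b = 1 then g l1 l2 else 1 - g l1 l2) *
            (if fC z l2 = c then (1 : ℝ) else 0)) := by
  obtain ⟨n1, n2, q1, q2, pA, pB, pC, ⟨hq10, hq11⟩, ⟨hq20, hq21⟩,
    hA0, hA1, hB0, hB1, hC0, hC1, hrep⟩ := h
  have hn1 : 0 < n1 := by
    rcases Nat.eq_zero_or_pos n1 with h0 | h0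
    · subst h0; simp at hq11
    · exact h0
  have hn2 : 0 < n2 := by
    rcases Nat.eq_zero_or_pos n2 with h0 | h0
    · subst h0; simp at hq21
    · exact h0
  have hAsum : ∀ x k, pA 0 x k + pA 1 x k = 1 := by
    intro x k; have := hA1 x k; rwa [Fin.sum_univ_two] at this
  have hBsum : ∀ k j, pB 0 k j + pB 1 k j = 1 := by
    intro k j; have := hB1 k j; rwa [Fin.sum_univ_two] at this
  have hCsum : ∀ z j, pC 0 z j + pC 1 z j = 1 := by
    intro z j; have := hC1 z j; rwa [Fin.sum_univ_two] at this
  refine ⟨fun x => thr hn1 q1 (fun k => cum q1 k + q1 k * pA 1 x k),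
    fun z => thr hn2 q2 (fun j => cum q2 j + q2 j * pC 1 z j),
    fun l1 l2 => pB 1 (idx hn1 q1 l1) (idx hn2 q2 l2),
    fun x => measurable_thr hn1 q1 _, fun z => measurable_thr hn2 q2 _, ?_, ?_, ?_⟩
  · have heq : (Function.uncurry fun l1 l2 => pB 1 (idx hn1 q1 l1) (idx hn2 q2 l2)) =
        (fun kj : Fin n1 × Fin n2 => pB 1 kj.1 kj.2) ∘
          (fun w : ℝ × ℝ => (idx hn1 q1 w.1, idx hn2 q2 w.2)) := rfl
    rw [heq]
    exact (measurable_of_countable _).comp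
      (((measurable_idx hn1 q1).comp measurable_fst).prodMk
        ((measurable_idx hn2 q2).comp measurable_snd))
  · intro l1 l2
    refine ⟨hB0 1 _ _, ?_⟩
    have := hBsum (idx hn1 q1 l1) (idx hn2 q2 l2)
    have := hB0 0 (idx hn1 q1 l1) (idx hn2 q2 l2)
    linarith
  · intro a b c x z
    have hb_eq : ∀ (k : Fin n1) (j : Fin n2),
        (if b = 1 then pB 1 k j else 1 - pB 1 k j) = pB b k j := by
      intro k j
      rcases (by omega : b = 0 ∨ b = 1) with rfl | rfl
      · rw [if_neg (by decide)]; have := hBsum k j; linarith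
      · rw [if_pos rfl]
    set W : Fin n1 → ℝ := fun k => ∑ j, q2 j * pC c z j * pB b k j with hW
    have inner : ∀ l1 : ℝ,
        (∫ l2 in Set.Icc (0 : ℝ) 1,
          (if thr hn1 q1 (fun k => cum q1 k + q1 k * pA 1 x k) l1 = a then (1 : ℝ) else 0) *
            (if b = 1 then pB 1 (idx hn1 q1 l1) (idx hn2 q2 l2)
              else 1 - pB 1 (idx hn1 q1 l1) (idx hn2 q2 l2)) *
            (if thr hn2 q2 (fun j => cum q2 j + q2 j * pC 1 z j) l2 = c then (1 : ℝ) else 0))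
          = (if thr hn1 q1 (fun k => cum q1 k + q1 k * pA 1 x k) l1 = a then (1 : ℝ) else 0) *
              W (idx hn1 q1 l1) := by
      intro l1
      have hfe : (fun l2 : ℝ =>
          (if thr hn1 q1 (fun k => cum q1 k + q1 k * pA 1 x k) l1 = a then (1 : ℝ) else 0) *
            (if b = 1 then pB 1 (idx hn1 q1 l1) (idx hn2 q2 l2)
              else 1 - pB 1 (idx hn1 q1 l1) (idx hn2 q2 l2)) *
            (if thr hn2 q2 (fun j => cum q2 j + q2 j * pC 1 z j) l2 = c then (1 : ℝ) else 0)) =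
          (fun l2 : ℝ =>
            (if thr hn2 q2 (fun j => cum q2 j + q2 j * pC 1 z j) l2 = c then (1 : ℝ) else 0) *
              ((fun j => (if thr hn1 q1 (fun k => cum q1 k + q1 k * pA 1 x k) l1 = a
                  then (1 : ℝ) else 0) * pB b (idx hn1 q1 l1) j) (idx hn2 q2 l2))) := by
        funext l2
        simp only [hb_eq]
        ring
      rw [hfe, integral_thr hn2 q2 hq20 hq21 (fun i j => pC i z j) (fun i j => hC0 i z j)
        (fun j => hCsum z j)
        (fun j => (if thr hn1 q1 (fun k => cum q1 k + q1 k * pA 1 x k) l1 = a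
          then (1 : ℝ) else 0) * pB b (idx hn1 q1 l1) j) c]
      simp only [hW, Finset.mul_sum]
      exact Finset.sum_congr rfl (fun j _ => by ring)
    rw [setIntegral_congr_fun measurableSet_Icc (fun l1 _ => inner l1)]
    rw [integral_thr hn1 q1 hq10 hq11 (fun i k => pA i x k) (fun i k => hA0 i x k)
      (fun k => hAsum x k) W a]
    rw [hrep]
    refine Finset.sum_congr rfl (fun k _ => ?_)
    simp only [hW, Finset.mul_sum]
    exact Finset.sum_congr rfl (fun j _ => by ring)

lemma backward (p : Corr)
    (fA fC : Fin 2 → ℝ → Fin 2) (g : ℝ → ℝ → ℝ)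
    (hmA : ∀ x, Measurable (fA x)) (hmC : ∀ z, Measurable (fC z))
    (hmg : Measurable (Function.uncurry g)) (hgb : ∀ l1 l2, 0 ≤ g l1 l2 ∧ g l1 l2 ≤ 1)
    (hrep : ∀ a b c x z, p a b c x z =
      ∫ l1 in Set.Icc (0 : ℝ) 1, ∫ l2 in Set.Icc (0 : ℝ) 1,
        (if fA x l1 = a then (1 : ℝ) else 0) *
          (if b = 1 then g l1 l2 else 1 - g l1 l2) *
          (if fC z l2 = c then (1 : ℝ) else 0)) :
    MemS0 p := by
  classical
  set GA : ℝ → Fin 2 → Fin 2 := fun l x' => fA x' l with hGAdef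
  set GC : ℝ → Fin 2 → Fin 2 := fun l z' => fC z' l with hGCdef
  have hGA : Measurable GA := measurable_pi_lambda _ hmA
  have hGC : Measurable GC := measurable_pi_lambda _ hmC
  set Q1 : (Fin 2 → Fin 2) → ℝ := fun s => (volume (pre GA s)).toReal with hQ1
  set Q2 : (Fin 2 → Fin 2) → ℝ := fun t => (volume (pre GC t)).toReal with hQ2
  set PB : Fin 2 → (Fin 2 → Fin 2) → (Fin 2 → Fin 2) → ℝ := fun b s t =>
    if Q1 s * Q2 t = 0 then 1 / 2 else KK g GA GC b s t / (Q1 s * Q2 t) with hPB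
  set e : Fin (Fintype.card (Fin 2 → Fin 2)) ≃ (Fin 2 → Fin 2) :=
    (Fintype.equivFin (Fin 2 → Fin 2)).symm with he
  have hQ1sum : ∑ s : Fin 2 → Fin 2, Q1 s = 1 := by
    simp only [hQ1]
    rw [← ENNReal.toReal_sum (fun s _ => volume_pre_ne_top GA s)]
    have hmp : ∑ s : Fin 2 → Fin 2, volume (pre GA s) = volume (Set.Icc (0 : ℝ) 1) := by
      simpa [pre] using measure_partition GA hGA (Set.Icc 0 1) measurableSet_Icc
    rw [hmp]
    simp [Real.volume_Icc]
  have hQ2sum : ∑ t : Fin 2 → Fin 2, Q2 t = 1 := by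
    simp only [hQ2]
    rw [← ENNReal.toReal_sum (fun t _ => volume_pre_ne_top GC t)]
    have hmp : ∑ t : Fin 2 → Fin 2, volume (pre GC t) = volume (Set.Icc (0 : ℝ) 1) := by
      simpa [pre] using measure_partition GC hGC (Set.Icc 0 1) measurableSet_Icc
    rw [hmp]
    simp [Real.volume_Icc]
  refine ⟨Fintype.card (Fin 2 → Fin 2), Fintype.card (Fin 2 → Fin 2),
    fun k => Q1 (e k), fun j => Q2 (e j),
    fun a x k => if e k x = a then 1 else 0,
    fun b k j => PB b (e k) (e j),
    fun c z j => if e j z = c then 1 else 0,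
    ⟨fun k => ENNReal.toReal_nonneg, by rw [Equiv.sum_comp e Q1]; exact hQ1sum⟩,
    ⟨fun j => ENNReal.toReal_nonneg, by rw [Equiv.sum_comp e Q2]; exact hQ2sum⟩,
    fun a x k => by positivity,
    fun x k => by rw [Finset.sum_ite_eq Finset.univ (e k x) (fun _ => (1 : ℝ))]; simp,
    fun b k j => ?_, fun k j => ?_,
    fun c z j => by positivity,
    fun z j => by rw [Finset.sum_ite_eq Finset.univ (e j z) (fun _ => (1 : ℝ))]; simp,
    ?_⟩
  · -- pB nonneg
    simp only [hPB]
    split_ifs with h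
    · norm_num
    · exact div_nonneg (KK_nonneg hgb GA GC b _ _)
        (mul_nonneg ENNReal.toReal_nonneg ENNReal.toReal_nonneg)
  · -- pB sums to one
    rw [Fin.sum_univ_two]
    simp only [hPB]
    split_ifs with h
    · norm_num
    · rw [← add_div, KK_add hmg hgb GA GC (e k) (e j)]
      exact div_self h
  · -- main identity
    intro a b c x z
    rw [hrep a b c x z]
    have hd : (∫ l1 in Set.Icc (0 : ℝ) 1, ∫ l2 in Set.Icc (0 : ℝ) 1,
        (if fA x l1 = a then (1 : ℝ) else 0) *
          (if b = 1 then g l1 l2 else 1 - g l1 l2) *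
          (if fC z l2 = c then (1 : ℝ) else 0))
        = ∑ s : Fin 2 → Fin 2, ∑ t : Fin 2 → Fin 2,
          (if s x = a then (1 : ℝ) else 0) * (if t z = c then (1 : ℝ) else 0) *
            KK g GA GC b s t := decomp fA fC hmA hmC hmg hgb a b c x z
    rw [hd]
    have hsum2 : ∀ F : (Fin 2 → Fin 2) → (Fin 2 → Fin 2) → ℝ,
        (∑ k, ∑ j, F (e k) (e j)) = ∑ s, ∑ t, F s t := by
      intro F
      rw [Equiv.sum_comp e (fun s => ∑ j, F s (e j))]
      exact Finset.sum_congr rfl (fun s _ => Equiv.sum_comp e (F s))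
    rw [hsum2 (fun s t => Q1 s * Q2 t * (if s x = a then (1 : ℝ) else 0) * PB b s t *
      (if t z = c then (1 : ℝ) else 0))]
    refine Finset.sum_congr rfl (fun s _ => Finset.sum_congr rfl (fun t _ => ?_))
    by_cases h0 : Q1 s * Q2 t = 0
    · have hK0 : KK g GA GC b s t = 0 := by
        rcases mul_eq_zero.mp h0 with h | h
        · exact KK_zeroA GA GC b s t h
        · exact KK_zeroC GA GC b s t h
      have hre : Q1 s * Q2 t * (if s x = a then (1 : ℝ) else 0) * PB b s t *
          (if t z = c then (1 : ℝ) else 0)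
          = (Q1 s * Q2 t) * ((if s x = a then (1 : ℝ) else 0) * PB b s t *
            (if t z = c then (1 : ℝ) else 0)) := by ring
      rw [hK0, mul_zero, hre, h0, zero_mul]
    · simp only [hPB, if_neg h0]
      field_simp
      ring_nf
      have h1 : Q1 s ≠ 0 := left_ne_zero_of_mul h0
      have h2 : Q2 t ≠ 0 := right_ne_zero_of_mul h0
      field_simp

end AuxSection

open MeasureTheory

/-- uniform-deterministic representation of `S0`: `p ∈ S0` iff it
arises from measurable deterministic response functions for Alice and Charlie
and a measurable Bob response `g` on `[0,1]²` with Lebesgue measure. -/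
theorem s0_uniform_deterministic (p : Corr) (hp : IsCorrelation p) :
    MemS0 p ↔
    ∃ (fA : Fin 2 → ℝ → Fin 2) (fC : Fin 2 → ℝ → Fin 2) (g : ℝ → ℝ → ℝ),
      (∀ x, Measurable (fA x)) ∧ (∀ z, Measurable (fC z)) ∧
      Measurable (Function.uncurry g) ∧
      (∀ l1 l2, 0 ≤ g l1 l2 ∧ g l1 l2 ≤ 1) ∧
      (∀ a b c x z, p a b c x z =
        ∫ l1 in Set.Icc (0 : ℝ) 1, ∫ l2 in Set.Icc (0 : ℝ) 1,
          (if fA x l1 = a then (1 : ℝ) else 0) *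
            (if b = 1 then g l1 l2 else 1 - g l1 l2) *
            (if fC z l2 = c then (1 : ℝ) else 0)) := by
  constructor
  · exact fun h => forward p h
  · rintro ⟨fA, fC, g, h1, h2, h3, h4, h5⟩
    exact backward p fA fC g h1 h2 h3 h4 h5
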